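/- Lemma (element-wise stress lower bound): For any stress τ in the 7-parameter mode with parameter vector β^τ ∈ ℝ⁷, ‖τ‖²_{0,K} ≥ c · min_{(ξ,η)∈K̂} J_K(ξ,η) · Σ_{i=1}^{7} (β_i^τ)², where c > 0 depends only on the shape-regularity constant. -/

import Mathlib

lemma intcube (p q r s : ℝ) :
    ∫ x in (-1:ℝ)..1, (p + q*x + r*x^2 + s*x^3) = 2*p + 2/3*r := by
  have h : ∀ x ∈ Set.uIcc (-1:ℝ) 1,
      HasDerivAt (fun x : ℝ => p*x + q/2*x^2 + r/3*x^3 + s/4*x^4)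
        (p + q*x + r*x^2 + s*x^3) x := by
    intro x _
    have h1 : HasDerivAt (fun x : ℝ => p*x) p x := by
      simpa using (hasDerivAt_id x).const_mul p
    have h2 : HasDerivAt (fun x : ℝ => q/2*x^2) (q*x) x := by
      have := (hasDerivAt_pow 2 x).const_mul (q/2)
      exact this.congr_deriv (by push_cast; ring)
    have h3 : HasDerivAt (fun x : ℝ => r/3*x^3) (r*x^2) x := by
      have := (hasDerivAt_pow 3 x).const_mul (r/3)
      exact this.congr_deriv (by push_cast; ring)
    have h4 : HasDerivAt (fun x : ℝ => s/4*x^4) (s*x^3) x := by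
      have := (hasDerivAt_pow 4 x).const_mul (s/4)
      exact this.congr_deriv (by push_cast; ring)
    exact ((h1.add h2).add h3).add h4
  have hint : IntervalIntegrable (fun x : ℝ => p + q*x + r*x^2 + s*x^3)
      MeasureTheory.volume (-1) 1 := (by fun_prop : Continuous _).intervalIntegrable _ _
  rw [intervalIntegral.integral_eq_sub_of_hasDerivAt h hint]
  norm_num; ring

lemma inner_val (u1 u2 u3 r1 r2 r3 k m : ℝ) :
    (∫ x in (-1:ℝ)..1, ((u1 + r1*x)^2 + (u2 + r2*x)^2 + 2*(u3 + r3*x)^2) * (k + m*x))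
      = 2*((u1^2+u2^2+2*u3^2)*k)
        + 2/3*((r1^2+r2^2+2*r3^2)*k + 2*(u1*r1+u2*r2+2*u3*r3)*m) := by
  rw [show (fun x : ℝ => ((u1 + r1*x)^2 + (u2 + r2*x)^2 + 2*(u3 + r3*x)^2) * (k + m*x))
      = fun x : ℝ => ((u1^2+u2^2+2*u3^2)*k)
          + (2*(u1*r1+u2*r2+2*u3*r3)*k + (u1^2+u2^2+2*u3^2)*m)*x
          + ((r1^2+r2^2+2*r3^2)*k + 2*(u1*r1+u2*r2+2*u3*r3)*m)*x^2
          + ((r1^2+r2^2+2*r3^2)*m)*x^3 from funext fun x => by ring]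
  rw [intcube]

set_option maxHeartbeats 2000000 in
theorem transition_stress_lower_bound :
    ∀ ϱ : ℝ, 2 < ϱ → ∃ c : ℝ, 0 < c ∧
      ∀ (a1 a2 a12 b1 b2 b12 hK ρK Jmin J0 : ℝ) (β : Fin 7 → ℝ) (J : ℝ → ℝ → ℝ),
        J0 = a1 * b2 - a2 * b1 →
        (∀ ξ η, J ξ η = J0 + (a1 * b12 - a12 * b1) * ξ + (a12 * b2 - a2 * b12) * η) →
        0 < ρK → hK ≤ ϱ * ρK →
        ρK ^ 2 < 4 * (a1 ^ 2 + b1 ^ 2) → 4 * (a1 ^ 2 + b1 ^ 2) < hK ^ 2 →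
        ρK ^ 2 < 4 * (a2 ^ 2 + b2 ^ 2) → 4 * (a2 ^ 2 + b2 ^ 2) < hK ^ 2 →
        4 * (a12 ^ 2 + b12 ^ 2) < hK ^ 2 / 4 →
        |b1| ≤ a1 → |a2| ≤ b2 →
        0 < Jmin →
        (∀ ξ ∈ Set.Icc (-1 : ℝ) 1, ∀ η ∈ Set.Icc (-1 : ℝ) 1,
          Jmin ≤ J ξ η ∧ hK ^ 2 ≤ ϱ ^ 2 * J ξ η ∧ J ξ η ≤ hK ^ 2) →
        c * Jmin * ∑ i, (β i) ^ 2
          ≤ ∫ ξ in (-1 : ℝ)..1, ∫ η in (-1 : ℝ)..1,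
            ((β 0 + β 3 * η + β 5 * ξ) ^ 2
              + (β 1 + β 4 * ξ + β 6 * η) ^ 2
              + 2 * (β 2 + β 3 * ((b1 ^ 2 * ξ + b1 * b2 * η) / J0)
                  + β 4 * ((a1 * a2 * ξ + a2 ^ 2 * η) / J0)
                  - β 5 * ((b1 * b2 * ξ + b2 ^ 2 * η) / J0)
                  - β 6 * ((a1 ^ 2 * ξ + a1 * a2 * η) / J0)) ^ 2) * J ξ η := by
  intro ϱ hϱ
  refine ⟨4/3, by norm_num, ?_⟩
  intro a1 a2 a12 b1 b2 b12 hK ρK Jmin J0 β J hJ0 hJ hρK hhK h1 h2 h3 h4 h5 h6 h7 hJmin hbound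
  set c1 : ℝ := a1 * b12 - a12 * b1 with hc1
  set c2 : ℝ := a12 * b2 - a2 * b12 with hc2
  set A : ℝ := (β 3 * b1^2 + β 4 * (a1*a2) - β 5 * (b1*b2) - β 6 * a1^2) / J0 with hA
  set B : ℝ := (β 3 * (b1*b2) + β 4 * a2^2 - β 5 * b2^2 - β 6 * (a1*a2)) / J0 with hB
  set g : ℝ → ℝ → ℝ := fun ξ η =>
    (β 0 + β 5*ξ + β 3*η)^2 + (β 1 + β 4*ξ + β 6*η)^2 + 2*(β 2 + A*ξ + B*η)^2 with hg
  -- rewrite the double integral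
  have hORIG : ∀ ξ η : ℝ,
      ((β 0 + β 3 * η + β 5 * ξ) ^ 2
        + (β 1 + β 4 * ξ + β 6 * η) ^ 2
        + 2 * (β 2 + β 3 * ((b1 ^ 2 * ξ + b1 * b2 * η) / J0)
            + β 4 * ((a1 * a2 * ξ + a2 ^ 2 * η) / J0)
            - β 5 * ((b1 * b2 * ξ + b2 ^ 2 * η) / J0)
            - β 6 * ((a1 ^ 2 * ξ + a1 * a2 * η) / J0)) ^ 2) * J ξ η
      = g ξ η * (J0 + c1*ξ + c2*η) := by
    intro ξ η
    rw [hJ]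
    simp only [hg, hA, hB]
    ring
  have hrw : (∫ ξ in (-1 : ℝ)..1, ∫ η in (-1 : ℝ)..1,
      ((β 0 + β 3 * η + β 5 * ξ) ^ 2
        + (β 1 + β 4 * ξ + β 6 * η) ^ 2
        + 2 * (β 2 + β 3 * ((b1 ^ 2 * ξ + b1 * b2 * η) / J0)
            + β 4 * ((a1 * a2 * ξ + a2 ^ 2 * η) / J0)
            - β 5 * ((b1 * b2 * ξ + b2 ^ 2 * η) / J0)
            - β 6 * ((a1 ^ 2 * ξ + a1 * a2 * η) / J0)) ^ 2) * J ξ η)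
      = ∫ ξ in (-1 : ℝ)..1, ∫ η in (-1 : ℝ)..1, g ξ η * (J0 + c1*ξ + c2*η) :=
    intervalIntegral.integral_congr fun ξ _ =>
      intervalIntegral.integral_congr fun η _ => hORIG ξ η
  rw [hrw]
  -- evaluate the inner integral
  have hinner : ∀ ξ : ℝ, (∫ η in (-1 : ℝ)..1, g ξ η * (J0 + c1*ξ + c2*η))
      = 2*(((β 0 + β 5*ξ)^2 + (β 1 + β 4*ξ)^2 + 2*(β 2 + A*ξ)^2)*(J0 + c1*ξ))
        + 2/3*(((β 3)^2+(β 6)^2+2*B^2)*(J0 + c1*ξ)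
          + 2*((β 0 + β 5*ξ)*(β 3)+(β 1 + β 4*ξ)*(β 6)+2*(β 2 + A*ξ)*B)*c2) := by
    intro ξ
    simp only [hg]
    exact inner_val (β 0 + β 5*ξ) (β 1 + β 4*ξ) (β 2 + A*ξ) (β 3) (β 6) B (J0 + c1*ξ) c2
  have houter : (∫ ξ in (-1 : ℝ)..1, ∫ η in (-1 : ℝ)..1, g ξ η * (J0 + c1*ξ + c2*η))
      = ∫ ξ in (-1 : ℝ)..1,
        (2*(((β 0 + β 5*ξ)^2 + (β 1 + β 4*ξ)^2 + 2*(β 2 + A*ξ)^2)*(J0 + c1*ξ))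
        + 2/3*(((β 3)^2+(β 6)^2+2*B^2)*(J0 + c1*ξ)
          + 2*((β 0 + β 5*ξ)*(β 3)+(β 1 + β 4*ξ)*(β 6)+2*(β 2 + A*ξ)*B)*c2)) :=
    intervalIntegral.integral_congr fun ξ _ => hinner ξ
  rw [houter]
  -- lower bound: compare with Jmin-weighted integral
  have hmono : (∫ ξ in (-1 : ℝ)..1,
        Jmin * (2*((β 0 + β 5*ξ)^2 + (β 1 + β 4*ξ)^2 + 2*(β 2 + A*ξ)^2)
          + 2/3*((β 3)^2+(β 6)^2+2*B^2)))
      ≤ ∫ ξ in (-1 : ℝ)..1,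
        (2*(((β 0 + β 5*ξ)^2 + (β 1 + β 4*ξ)^2 + 2*(β 2 + A*ξ)^2)*(J0 + c1*ξ))
        + 2/3*(((β 3)^2+(β 6)^2+2*B^2)*(J0 + c1*ξ)
          + 2*((β 0 + β 5*ξ)*(β 3)+(β 1 + β 4*ξ)*(β 6)+2*(β 2 + A*ξ)*B)*c2)) := by
    apply intervalIntegral.integral_mono_on (by norm_num)
    · exact (by fun_prop : Continuous _).intervalIntegrable _ _
    · exact (by fun_prop : Continuous _).intervalIntegrable _ _
    · intro ξ hξ
      have e1 : Jmin * (2*((β 0 + β 5*ξ)^2 + (β 1 + β 4*ξ)^2 + 2*(β 2 + A*ξ)^2)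
            + 2/3*((β 3)^2+(β 6)^2+2*B^2))
          = ∫ η in (-1 : ℝ)..1, g ξ η * Jmin := by
        have e1a := inner_val (β 0 + β 5*ξ) (β 1 + β 4*ξ) (β 2 + A*ξ) (β 3) (β 6) B Jmin 0
        have e1b : (∫ x in (-1:ℝ)..1,
            (((β 0 + β 5*ξ) + (β 3)*x)^2 + ((β 1 + β 4*ξ) + (β 6)*x)^2
              + 2*((β 2 + A*ξ) + B*x)^2) * (Jmin + 0*x))
            = ∫ η in (-1 : ℝ)..1, g ξ η * Jmin :=
          intervalIntegral.integral_congr fun η _ => by simp only [hg]; ring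
        rw [← e1b, e1a]; ring
      have e2 : (2*(((β 0 + β 5*ξ)^2 + (β 1 + β 4*ξ)^2 + 2*(β 2 + A*ξ)^2)*(J0 + c1*ξ))
        + 2/3*(((β 3)^2+(β 6)^2+2*B^2)*(J0 + c1*ξ)
          + 2*((β 0 + β 5*ξ)*(β 3)+(β 1 + β 4*ξ)*(β 6)+2*(β 2 + A*ξ)*B)*c2))
          = ∫ η in (-1 : ℝ)..1, g ξ η * (J0 + c1*ξ + c2*η) := (hinner ξ).symm
      rw [e1, e2]
      apply intervalIntegral.integral_mono_on (by norm_num)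
      · exact ((by simp only [hg]; fun_prop : Continuous fun η : ℝ => g ξ η * Jmin)).intervalIntegrable _ _
      · exact ((by simp only [hg]; fun_prop : Continuous fun η : ℝ => g ξ η * (J0 + c1*ξ + c2*η))).intervalIntegrable _ _
      · intro η hη
        have h1' := (hbound ξ hξ η hη).1
        rw [hJ] at h1'
        have h2' : 0 ≤ g ξ η := by simp only [hg]; positivity
        exact mul_le_mul_of_nonneg_left h1' h2'
  refine le_trans ?_ hmono
  -- evaluate the lower integral
  rw [intervalIntegral.integral_const_mul]
  have hval : (∫ ξ in (-1 : ℝ)..1,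
      (2*((β 0 + β 5*ξ)^2 + (β 1 + β 4*ξ)^2 + 2*(β 2 + A*ξ)^2)
        + 2/3*((β 3)^2+(β 6)^2+2*B^2)))
      = 2*(2*((β 0)^2+(β 1)^2+2*(β 2)^2) + 2/3*((β 3)^2+(β 6)^2+2*B^2))
        + 2/3*(2*((β 5)^2+(β 4)^2+2*A^2)) := by
    rw [show (fun ξ : ℝ =>
        (2*((β 0 + β 5*ξ)^2 + (β 1 + β 4*ξ)^2 + 2*(β 2 + A*ξ)^2)
          + 2/3*((β 3)^2+(β 6)^2+2*B^2)))
      = fun ξ : ℝ => (2*((β 0)^2+(β 1)^2+2*(β 2)^2) + 2/3*((β 3)^2+(β 6)^2+2*B^2))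
          + (4*((β 0)*(β 5)+(β 1)*(β 4)+2*(β 2)*A))*ξ
          + (2*((β 5)^2+(β 4)^2+2*A^2))*ξ^2
          + 0*ξ^3 from funext fun ξ => by ring]
    rw [intcube]
  rw [hval, Fin.sum_univ_seven]
  nlinarith [sq_nonneg A, sq_nonneg B, sq_nonneg (β 0), sq_nonneg (β 1), sq_nonneg (β 2),
    mul_nonneg hJmin.le (sq_nonneg A), mul_nonneg hJmin.le (sq_nonneg B),
    mul_nonneg hJmin.le (sq_nonneg (β 0)), mul_nonneg hJmin.le (sq_nonneg (β 1)),
    mul_nonneg hJmin.le (sq_nonneg (β 2))]
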